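/- Let c₁∞, c₂∞, c₃∞ > 0 with c∞ = c₁∞ + c₂∞ + c₃∞ and c₁∞ c₂∞ = c₃∞ c∞. Let c̄₁, c̄₂, c̄₃ ≥ 0 and c̄ ≥ 0 satisfy c̄₁ + c̄₃ = c₁∞ + c₃∞, c̄₂ + c̄₃ = c₂∞ + c₃∞, c̄₁ + c̄₂ + c̄₃ = c̄, and c̄ᵢ ≤ K for i = 1,2,3 for some K > 0. Then there exists a constant C₀ > 0 depending only on c₁∞, c₂∞, c₃∞ and K such that (√c̄₁ √c̄₂ − √c̄₃ √c̄)² ≥ C₀ Σ_{i=1}^3 (√c̄ᵢ − √cᵢ∞)². -/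
import Mathlib


theorem constructive_finite_dim_ineq (c1i c2i c3i K : ℝ)
    (h1 : 0 < c1i) (h2 : 0 < c2i) (h3 : 0 < c3i) (hK : 0 < K)
    (heq : c1i * c2i = c3i * (c1i + c2i + c3i)) :
    ∃ C₀ > 0, ∀ c1 c2 c3 c : ℝ,
      0 ≤ c1 → 0 ≤ c2 → 0 ≤ c3 → 0 ≤ c →
      c1 + c3 = c1i + c3i → c2 + c3 = c2i + c3i → c1 + c2 + c3 = c →
      c1 ≤ K → c2 ≤ K → c3 ≤ K →
      (Real.sqrt c1 * Real.sqrt c2 - Real.sqrt c3 * Real.sqrt c) ^ 2 ≥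
        C₀ * ((Real.sqrt c1 - Real.sqrt c1i) ^ 2 + (Real.sqrt c2 - Real.sqrt c2i) ^ 2 +
          (Real.sqrt c3 - Real.sqrt c3i) ^ 2) := by
  have hPpos : 0 < c1i * c2i + c1i * c3i + c2i * c3i := by positivity
  refine ⟨c1i * c2i ^ 3 * c3i / (2 * K ^ 2 * (c1i * c2i + c1i * c3i + c2i * c3i)),
    by positivity, ?_⟩
  intro c1 c2 c3 c hc1 hc2 hc3 hc h13 h23 hsum hK1 hK2 hK3
  set s1 := Real.sqrt c1 with hs1def
  set s2 := Real.sqrt c2 with hs2def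
  set s3 := Real.sqrt c3 with hs3def
  set sc := Real.sqrt c with hscdef
  set t1 := Real.sqrt c1i with ht1def
  set t2 := Real.sqrt c2i with ht2def
  set t3 := Real.sqrt c3i with ht3def
  have hs1 : s1 ^ 2 = c1 := Real.sq_sqrt hc1
  have hs2 : s2 ^ 2 = c2 := Real.sq_sqrt hc2
  have hs3 : s3 ^ 2 = c3 := Real.sq_sqrt hc3
  have hsc : sc ^ 2 = c := Real.sq_sqrt hc
  have ht1 : t1 ^ 2 = c1i := Real.sq_sqrt h1.le
  have ht2 : t2 ^ 2 = c2i := Real.sq_sqrt h2.le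
  have ht3 : t3 ^ 2 = c3i := Real.sq_sqrt h3.le
  have hs1n : 0 ≤ s1 := Real.sqrt_nonneg _
  have hs2n : 0 ≤ s2 := Real.sqrt_nonneg _
  have hs3n : 0 ≤ s3 := Real.sqrt_nonneg _
  have hscn : 0 ≤ sc := Real.sqrt_nonneg _
  have ht1n : 0 ≤ t1 := Real.sqrt_nonneg _
  have ht2n : 0 ≤ t2 := Real.sqrt_nonneg _
  have ht3n : 0 ≤ t3 := Real.sqrt_nonneg _
  set d := c3 - c3i with hd
  -- key identity
  have hkey : c1 * c2 - c3 * c = -2 * d * (c1 + c2i) := by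
    have e1 : c1 = c1i + c3i - c3 := by linarith
    have e2 : c2 = c2i + c3i - c3 := by linarith
    have ec : c = c1i + c2i + 2 * c3i - c3 := by linarith
    rw [hd, e1, e2, ec]
    linear_combination heq
  -- lower bound on (c1 c2 - c3 c)^2
  have hd2 : 4 * d ^ 2 * c2i ^ 2 ≤ (c1 * c2 - c3 * c) ^ 2 := by
    rw [hkey]
    have hA : 0 ≤ d ^ 2 * (c1 ^ 2 + 2 * (c1 * c2i)) :=
      mul_nonneg (sq_nonneg d)
        (add_nonneg (sq_nonneg c1) (by positivity))
    linarith [hA]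
  -- bound the sum of square roots
  have ha2 : (s1 * s2) ^ 2 = c1 * c2 := by rw [mul_pow, hs1, hs2]
  have hb2 : (s3 * sc) ^ 2 = c3 * c := by rw [mul_pow, hs3, hsc]
  have hcle : c ≤ 3 * K := by linarith
  have hy : c1 * c2 ≤ K * K := mul_le_mul hK1 hK2 hc2 hK.le
  have hz : c3 * c ≤ K * (3 * K) := mul_le_mul hK3 hcle hc hK.le
  have hsum8 : (s1 * s2 + s3 * sc) ^ 2 ≤ 8 * K ^ 2 := by
    have hw := sq_nonneg (s1 * s2 - s3 * sc)
    linarith [hw, ha2, hb2, hy, hz]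
  have habsq : (s1 * s2 - s3 * sc) ^ 2 * (s1 * s2 + s3 * sc) ^ 2 = (c1 * c2 - c3 * c) ^ 2 := by
    have h : (s1 * s2 - s3 * sc) ^ 2 * (s1 * s2 + s3 * sc) ^ 2
        = ((s1 * s2) ^ 2 - (s3 * sc) ^ 2) ^ 2 := by ring
    rw [h, ha2, hb2]
  have hfnn : 0 ≤ (s1 * s2 - s3 * sc) ^ 2 := sq_nonneg _
  have hmain : 4 * d ^ 2 * c2i ^ 2 ≤ (s1 * s2 - s3 * sc) ^ 2 * (8 * K ^ 2) := by
    calc 4 * d ^ 2 * c2i ^ 2 ≤ (c1 * c2 - c3 * c) ^ 2 := hd2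
      _ = (s1 * s2 - s3 * sc) ^ 2 * (s1 * s2 + s3 * sc) ^ 2 := habsq.symm
      _ ≤ (s1 * s2 - s3 * sc) ^ 2 * (8 * K ^ 2) := by
          exact mul_le_mul_of_nonneg_left hsum8 hfnn
  -- bounds on the relative entropy-like terms
  have hg1 : (s1 - t1) ^ 2 * c1i ≤ d ^ 2 := by
    have h1' : (s1 - t1) * (s1 + t1) = -d := by
      have h : (s1 - t1) * (s1 + t1) = s1 ^ 2 - t1 ^ 2 := by ring
      rw [h, hs1, ht1]; linarith
    have hsq : ((s1 - t1) * (s1 + t1)) ^ 2 = d ^ 2 := by rw [h1']; ring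
    have hA : 0 ≤ (s1 - t1) ^ 2 * (s1 ^ 2 + 2 * (s1 * t1)) :=
      mul_nonneg (sq_nonneg _) (add_nonneg (sq_nonneg s1)
        (by positivity))
    rw [← ht1]
    linarith [hsq, hA]
  have hg2 : (s2 - t2) ^ 2 * c2i ≤ d ^ 2 := by
    have h2' : (s2 - t2) * (s2 + t2) = -d := by
      have h : (s2 - t2) * (s2 + t2) = s2 ^ 2 - t2 ^ 2 := by ring
      rw [h, hs2, ht2]; linarith
    have hsq : ((s2 - t2) * (s2 + t2)) ^ 2 = d ^ 2 := by rw [h2']; ring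
    have hA : 0 ≤ (s2 - t2) ^ 2 * (s2 ^ 2 + 2 * (s2 * t2)) :=
      mul_nonneg (sq_nonneg _) (add_nonneg (sq_nonneg s2)
        (by positivity))
    rw [← ht2]
    linarith [hsq, hA]
  have hg3 : (s3 - t3) ^ 2 * c3i ≤ d ^ 2 := by
    have h3' : (s3 - t3) * (s3 + t3) = d := by
      have h : (s3 - t3) * (s3 + t3) = s3 ^ 2 - t3 ^ 2 := by ring
      rw [h, hs3, ht3]
    have hsq : ((s3 - t3) * (s3 + t3)) ^ 2 = d ^ 2 := by rw [h3']
    have hA : 0 ≤ (s3 - t3) ^ 2 * (s3 ^ 2 + 2 * (s3 * t3)) :=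
      mul_nonneg (sq_nonneg _) (add_nonneg (sq_nonneg s3)
        (by positivity))
    rw [← ht3]
    linarith [hsq, hA]
  -- combine
  rw [ge_iff_le, div_mul_eq_mul_div, div_le_iff₀ (by positivity)]
  have m1 : (s1 - t1) ^ 2 * c1i * (c2i ^ 3 * c3i) ≤ d ^ 2 * (c2i ^ 3 * c3i) :=
    mul_le_mul_of_nonneg_right hg1 (by positivity)
  have m2 : (s2 - t2) ^ 2 * c2i * (c1i * c2i ^ 2 * c3i) ≤ d ^ 2 * (c1i * c2i ^ 2 * c3i) :=
    mul_le_mul_of_nonneg_right hg2 (by positivity)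
  have m3 : (s3 - t3) ^ 2 * c3i * (c1i * c2i ^ 3) ≤ d ^ 2 * (c1i * c2i ^ 3) :=
    mul_le_mul_of_nonneg_right hg3 (by positivity)
  have hA : d ^ 2 * c2i ^ 2 ≤ (s1 * s2 - s3 * sc) ^ 2 * (2 * K ^ 2) := by linarith
  have hB := mul_le_mul_of_nonneg_right hA hPpos.le
  linarith [m1, m2, m3, hB]
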